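/- If H is a Hilbert space and X ⊆ H has finite thickness exponent, then the dual thickness is bounded by the thickness: τ*(X) ≤ τ(X). -/

import Mathlib

open Filter Metric Set Pointwise Topology

/-- `coverNum X ε` : minimal number of balls of radius `ε` with centres in `X` covering `X`. -/
noncomputable def coverNum {E : Type*} [SeminormedAddCommGroup E] (X : Set E) (ε : ℝ) : ℕ∞ :=
  sInf {n : ℕ∞ | ∃ F : Finset E, ↑F ⊆ X ∧ (X ⊆ ⋃ c ∈ F, Metric.ball c ε) ∧ n = F.card}

/-- extended logarithm of an extended natural number. -/
noncomputable def elog (n : ℕ∞) : EReal :=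
  if n = ⊤ then ⊤ else ((Real.log n.toNat : ℝ) : EReal)

/-- The upper box-counting dimension `d_B(X) = limsup_{ε → 0⁺} log N(X,ε) / (-log ε)`. -/
noncomputable def dimBox {E : Type*} [SeminormedAddCommGroup E] (X : Set E) : EReal :=
  Filter.limsup (fun ε : ℝ => elog (coverNum X ε) / ((-Real.log ε : ℝ) : EReal)) (𝓝[>] 0)

/-- `thickNum X ε` : smallest dimension of a finite-dimensional subspace `V` with
`dist(x, V) ≤ ε` for all `x ∈ X` (`⊤` if none exists). -/
noncomputable def thickNum {E : Type*} [NormedAddCommGroup E] [NormedSpace ℝ E]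
    (X : Set E) (ε : ℝ) : ℕ∞ :=
  sInf {n : ℕ∞ | ∃ V : Submodule ℝ E, FiniteDimensional ℝ V ∧ n = Module.finrank ℝ V ∧
    ∀ x ∈ X, Metric.infDist x (V : Set E) ≤ ε}

/-- The thickness exponent `τ(X) = limsup_{ε → 0⁺} log d(X,ε) / (-log ε)`. -/
noncomputable def thickness {E : Type*} [NormedAddCommGroup E] [NormedSpace ℝ E]
    (X : Set E) : EReal :=
  Filter.limsup (fun ε : ℝ => elog (thickNum X ε) / ((-Real.log ε : ℝ) : EReal)) (𝓝[>] 0)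

/-- `dualThickNum X θ ε` : minimal dimension of a subspace `U ⊆ E*` such that for all
`x, y ∈ X` with `‖x - y‖ ≥ ε` some `φ ∈ U` has `|φ(x-y)| ≥ ε^(1+θ)`. -/
noncomputable def dualThickNum {E : Type*} [NormedAddCommGroup E] [NormedSpace ℝ E]
    (X : Set E) (θ ε : ℝ) : ℕ∞ :=
  sInf {n : ℕ∞ | ∃ U : Submodule ℝ (E →L[ℝ] ℝ), FiniteDimensional ℝ U ∧ n = Module.finrank ℝ U ∧
    ∀ x ∈ X, ∀ y ∈ X, ε ≤ ‖x - y‖ → ∃ φ ∈ U, ε ^ (1 + θ) ≤ |φ (x - y)|}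

noncomputable def dualThickTheta {E : Type*} [NormedAddCommGroup E] [NormedSpace ℝ E]
    (X : Set E) (θ : ℝ) : EReal :=
  Filter.limsup (fun ε : ℝ => elog (dualThickNum X θ ε) / ((-Real.log ε : ℝ) : EReal)) (𝓝[>] 0)

/-- The dual thickness `τ*(X) = lim_{θ → 0⁺} τ*_θ(X)` (the limit exists by monotonicity and
equals the limsup as `θ → 0⁺`). -/
noncomputable def dualThickness {E : Type*} [NormedAddCommGroup E] [NormedSpace ℝ E]
    (X : Set E) : EReal :=
  Filter.limsup (fun θ : ℝ => dualThickTheta X θ) (𝓝[>] 0)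

/-- `sigmaNum X α ε` : minimal dimension of a subspace `V ⊆ E*` such that whenever
`x, y ∈ X` with `‖x - y‖ ≥ ε` there is `Φ ∈ V` with `‖Φ‖ = 1` and `|Φ(x-y)| ≥ α ε`. -/
noncomputable def sigmaNum {E : Type*} [NormedAddCommGroup E] [NormedSpace ℝ E]
    (X : Set E) (α ε : ℝ) : ℕ∞ :=
  sInf {n : ℕ∞ | ∃ V : Submodule ℝ (E →L[ℝ] ℝ), FiniteDimensional ℝ V ∧ n = Module.finrank ℝ V ∧
    ∀ x ∈ X, ∀ y ∈ X, ε ≤ ‖x - y‖ → ∃ Φ ∈ V, ‖Φ‖ = 1 ∧ α * ε ≤ |Φ (x - y)|}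

noncomputable def sigmaExp {E : Type*} [NormedAddCommGroup E] [NormedSpace ℝ E]
    (X : Set E) (α : ℝ) : EReal :=
  Filter.limsup (fun ε : ℝ => elog (sigmaNum X α ε) / ((-Real.log ε : ℝ) : EReal)) (𝓝[>] 0)

section Aux

open scoped RealInnerProductSpace

lemma elog_nonneg (n : ℕ∞) : 0 ≤ elog n := by
  unfold elog
  split
  · exact le_top
  · exact_mod_cast Real.log_natCast_nonneg _

lemma elog_ne_bot (n : ℕ∞) : elog n ≠ ⊥ := by
  unfold elog; split
  · simp
  · simp

lemma elog_mono {m n : ℕ∞} (hmn : m ≤ n) : elog m ≤ elog n := by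
  unfold elog
  rcases eq_or_ne n ⊤ with hn | hn
  · simp [hn]
  · have hm : m ≠ ⊤ := fun h => hn (top_le_iff.mp (h ▸ hmn))
    simp only [hm, hn, if_neg, if_false]
    rcases Nat.eq_zero_or_pos m.toNat with h0 | hpos
    · rw [h0]
      exact_mod_cast by simpa using Real.log_natCast_nonneg n.toNat
    · have hle : m.toNat ≤ n.toNat := ENat.toNat_le_toNat hmn hn
      exact_mod_cast Real.log_le_log (by exact_mod_cast hpos) (by exact_mod_cast hle)

variable {H : Type*} [NormedAddCommGroup H] [InnerProductSpace ℝ H]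

/-- The natural (linear over `ℝ`) map from a real inner product space into its dual. -/
noncomputable def innerD : H →ₗ[ℝ] (H →L[ℝ] ℝ) where
  toFun u := innerSL ℝ u
  map_add' u v := by ext w; simp
  map_smul' c u := by ext w; simp [real_inner_smul_left]

lemma innerD_apply (u w : H) : innerD u w = (inner ℝ u w : ℝ) := rfl

lemma dualThickNum_le_thickNum (X : Set H) {θ ε : ℝ} (hε : 0 < ε)
    (h9 : 9 * ε ^ (1 + θ) ≤ ε) :
    dualThickNum X θ ε ≤ thickNum X (ε ^ (1 + θ)) := by
  set δ := ε ^ (1 + θ) with hδdef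
  have hδ : 0 < δ := Real.rpow_pos_of_pos hε _
  apply sInf_le_sInf_of_isCoinitialFor
  rintro n ⟨V, hVfd, rfl, hVapp⟩
  refine ⟨(Module.finrank ℝ (V.map (innerD (H := H))) : ℕ∞),
    ⟨V.map (innerD (H := H)), inferInstance, rfl, ?_⟩,
    by exact_mod_cast Submodule.finrank_map_le (innerD (H := H)) V⟩
  intro x hx y hy hxy
  have hVne : (V : Set H).Nonempty := ⟨0, V.zero_mem⟩
  obtain ⟨vx, hvxV, hvx⟩ := (Metric.infDist_lt_iff hVne).mp
    (lt_of_le_of_lt (hVapp x hx) (by linarith : δ < 2 * δ))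
  obtain ⟨vy, hvyV, hvy⟩ := (Metric.infDist_lt_iff hVne).mp
    (lt_of_le_of_lt (hVapp y hy) (by linarith : δ < 2 * δ))
  set u := vx - vy with hudef
  have huV : u ∈ V := V.sub_mem hvxV hvyV
  have hrw : x - y - u = (x - vx) - (y - vy) := by rw [hudef]; abel
  have hxyu : ‖x - y - u‖ ≤ 4 * δ := by
    rw [hrw]
    have h1 : ‖(x - vx) - (y - vy)‖ ≤ dist x vx + dist y vy := by
      rw [dist_eq_norm, dist_eq_norm]; exact norm_sub_le _ _
    linarith
  have hunorm : ε - 4 * δ ≤ ‖u‖ := by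
    have h2 : ‖x - y‖ ≤ ‖x - y - u‖ + ‖u‖ := by
      calc ‖x - y‖ = ‖(x - y - u) + u‖ := by congr 1; abel
        _ ≤ ‖x - y - u‖ + ‖u‖ := norm_add_le _ _
    linarith
  have hu0 : 0 < ‖u‖ := by linarith
  set a : ℝ := (inner ℝ u (x - y) : ℝ) with hadef
  have hb : |(inner ℝ u (x - y - u) : ℝ)| ≤ ‖u‖ * (4 * δ) :=
    (abs_real_inner_le_norm u _).trans (mul_le_mul_of_nonneg_left hxyu (norm_nonneg _))
  have hsplit : a = ‖u‖ ^ 2 + (inner ℝ u (x - y - u) : ℝ) := by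
    have h : (inner ℝ u (x - y - u) : ℝ) = inner ℝ u (x - y) - inner ℝ u u :=
      inner_sub_right _ _ _
    rw [hadef, ← real_inner_self_eq_norm_sq, h]; ring
  have ha : ‖u‖ * (‖u‖ - 4 * δ) ≤ a := by
    have := (abs_le.mp hb).1
    nlinarith
  refine ⟨innerD (‖u‖⁻¹ • u), Submodule.mem_map_of_mem (V.smul_mem _ huV), ?_⟩
  have hφ : innerD (‖u‖⁻¹ • u) (x - y) = ‖u‖⁻¹ * a := by
    rw [innerD_apply, real_inner_smul_left, hadef]
  rw [hφ]
  have hstep : ‖u‖ - 4 * δ ≤ ‖u‖⁻¹ * a := by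
    have h3 := mul_le_mul_of_nonneg_left ha (inv_nonneg.mpr (norm_nonneg u))
    rwa [← mul_assoc, inv_mul_cancel₀ (ne_of_gt hu0), one_mul] at h3
  have : δ ≤ ‖u‖⁻¹ * a := by linarith
  exact this.trans (le_abs_self _)

lemma tendsto_rpow_nhdsWithin {p : ℝ} (hp : 0 < p) :
    Filter.Tendsto (fun ε : ℝ => ε ^ p) (𝓝[>] (0 : ℝ)) (𝓝[>] (0 : ℝ)) := by
  rw [tendsto_nhdsWithin_iff]
  constructor
  · have h := (Real.continuousAt_rpow_const 0 p (Or.inr hp.le)).tendsto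
    rw [Real.zero_rpow hp.ne'] at h
    exact h.mono_left nhdsWithin_le_nhds
  · filter_upwards [self_mem_nhdsWithin] with x hx
    exact Real.rpow_pos_of_pos hx p

lemma dualThickTheta_le (X : Set H) {θ c : ℝ} (hθ : 0 < θ)
    (hc : thickness X < (c : EReal)) :
    dualThickTheta X θ ≤ (((1 + θ) * c : ℝ) : EReal) := by
  have hev : ∀ᶠ δ in 𝓝[>] (0 : ℝ),
      elog (thickNum X δ) / ((-Real.log δ : ℝ) : EReal) < (c : EReal) :=
    Filter.eventually_lt_of_limsup_lt hc
  have hmap := tendsto_rpow_nhdsWithin (by linarith : (0:ℝ) < 1 + θ)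
  have h9 : ∀ᶠ ε in 𝓝[>] (0 : ℝ), 9 * ε ^ (1 + θ) ≤ ε := by
    have hsm : ∀ᶠ ε in 𝓝[>] (0 : ℝ), ε ^ θ < 1 / 9 := by
      have ht := (tendsto_rpow_nhdsWithin hθ).mono_right nhdsWithin_le_nhds
      exact ht.eventually (eventually_lt_nhds (by norm_num : (0:ℝ) < 1/9))
    filter_upwards [hsm, self_mem_nhdsWithin] with ε hsm' (hε : ε ∈ Set.Ioi (0:ℝ))
    have hε0 : (0:ℝ) < ε := hε
    have : ε ^ (1 + θ) = ε * ε ^ θ := by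
      rw [Real.rpow_add hε0, Real.rpow_one]
    rw [this]
    nlinarith [Real.rpow_pos_of_pos hε0 θ]
  have hlt1 : ∀ᶠ ε in 𝓝[>] (0 : ℝ), ε < 1 := by
    filter_upwards [Ioo_mem_nhdsGT_of_mem (Set.left_mem_Ico.mpr zero_lt_one)] with ε hε
    exact hε.2
  refine Filter.limsup_le_of_le (by isBoundedDefault) ?_
  filter_upwards [hmap.eventually hev, h9, hlt1, self_mem_nhdsWithin] with ε h1 h2 h3
    (h4 : ε ∈ Set.Ioi (0:ℝ))
  have hε0 : (0:ℝ) < ε := h4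
  have hr : 0 < -Real.log ε := by
    have := Real.log_neg hε0 h3; linarith
  have hlogδ : -Real.log (ε ^ (1 + θ)) = (1 + θ) * (-Real.log ε) := by
    rw [Real.log_rpow hε0]; ring
  rw [hlogδ] at h1
  have hNle : dualThickNum X θ ε ≤ thickNum X (ε ^ (1 + θ)) :=
    dualThickNum_le_thickNum X hε0 h2
  refine le_trans (EReal.div_le_div_right_of_nonneg
    (by exact_mod_cast hr.le) (elog_mono hNle)) ?_
  set A := elog (thickNum X (ε ^ (1 + θ))) with hAdef
  rcases eq_or_ne A ⊤ with hAtop | hAtop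
  · rw [hAtop, EReal.top_div_of_pos_ne_top (by exact_mod_cast by positivity) (EReal.coe_ne_top _)]
      at h1
    exact absurd h1 (not_top_lt)
  · have hAbot : A ≠ ⊥ := elog_ne_bot _
    have hAcoe : ((A.toReal : ℝ) : EReal) = A := EReal.coe_toReal hAtop hAbot
    set a := A.toReal with hadef
    rw [← hAcoe, ← EReal.coe_div, EReal.coe_lt_coe_iff] at h1
    rw [← hAcoe, ← EReal.coe_div, EReal.coe_le_coe_iff]
    have hs : 0 < (1 + θ) * (-Real.log ε) := by positivity
    have h5 : a < c * ((1 + θ) * (-Real.log ε)) := (div_lt_iff₀ hs).mp h1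
    rw [div_le_iff₀ hr]
    nlinarith

end Aux


/-- in a Hilbert space the dual thickness is bounded above by the
thickness exponent. -/
theorem dualThickness_le_thickness {H : Type*}
    [NormedAddCommGroup H] [InnerProductSpace ℝ H] [CompleteSpace H]
    (X : Set H) (hτ : thickness X < ⊤) :
    dualThickness X ≤ thickness X := by
  by_contra hcon
  push_neg at hcon
  obtain ⟨c, hc1, hc2⟩ := EReal.exists_between_coe_real hcon
  have hle : dualThickness X ≤ (c : EReal) := by
    unfold dualThickness
    have hb : ∀ᶠ θ in 𝓝[>] (0 : ℝ), dualThickTheta X θ ≤ (((1 + θ) * c : ℝ) : EReal) := by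
      filter_upwards [self_mem_nhdsWithin] with θ (hθ : θ ∈ Set.Ioi (0:ℝ))
      exact dualThickTheta_le X hθ hc1
    refine le_trans (Filter.limsup_le_limsup hb) ?_
    have hcont : Filter.Tendsto (fun θ : ℝ => (1 + θ) * c) (𝓝[>] (0 : ℝ)) (𝓝 c) := by
      have h0 : Filter.Tendsto (fun θ : ℝ => (1 + θ) * c) (𝓝 (0 : ℝ)) (𝓝 c) := by
        have hcts : Continuous fun θ : ℝ => (1 + θ) * c := by continuity
        have := hcts.tendsto 0
        simpa using this
      exact h0.mono_left nhdsWithin_le_nhds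
    have := ((continuous_coe_real_ereal.tendsto c).comp hcont).limsup_eq
    exact le_of_eq this
  exact absurd hc2 (not_lt.mpr hle)
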